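/- Let D ⊆ ℝ^d be open, let k ≥ 1, ε > 0, and let u ∈ L²(D). Then for every integer j ≥ 1: F_{jε}^{(j+k)ε,1}(u) ≤ F_ε^{kε,1}(u), i.e. ∫_{D((j+k)ε)} ∫_{{|ξ|≤1}} ((u(x+jεξ) − u(x))/(jε))² dξ dx ≤ ∫_{D(kε)} ∫_{{|ξ|≤1}} ((u(x+εξ) − u(x))/ε)² dξ dx. -/

import Mathlib

set_option maxHeartbeats 1000000

open MeasureTheory Metric
open scoped ENNReal

lemma mem_of_dist_lt_infDist_frontier {E : Type*} [NormedAddCommGroup E] [NormedSpace ℝ E]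
    {D : Set E} (hD : IsOpen D) {x y : E} (hx : x ∈ D)
    (h : dist y x < infDist x (frontier D)) : y ∈ D := by
  have hb : ball x (infDist x (frontier D)) ⊆ interior D ∪ interior Dᶜ := by
    rw [← compl_frontier_eq_union_interior]
    exact ball_infDist_subset_compl
  have hconn : IsPreconnected (ball x (infDist x (frontier D))) :=
    (convex_ball x _).isPreconnected
  have hxball : x ∈ ball x (infDist x (frontier D)) :=
    mem_ball_self (lt_of_le_of_lt dist_nonneg h)
  have hsub : ball x (infDist x (frontier D)) ⊆ interior D :=
    hconn.subset_left_of_subset_union isOpen_interior isOpen_interior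
      (Disjoint.mono interior_subset interior_subset disjoint_compl_right) hb
      ⟨x, hxball, by rw [hD.interior_eq]; exact hx⟩
  exact interior_subset (hsub (mem_ball.2 h))

lemma double_lintegral_congr {d : ℕ} {D : Set (EuclideanSpace ℝ (Fin d))}
    (hDm : MeasurableSet D)
    {u g : EuclideanSpace ℝ (Fin d) → ℝ} (hug : u =ᵐ[volume.restrict D] g)
    {S : Set (EuclideanSpace ℝ (Fin d))} (hSm : MeasurableSet S) (hSD : S ⊆ D)
    {c : ℝ} (hc : c ≠ 0)
    (hmem : ∀ x ∈ S, ∀ ξ ∈ closedBall (0 : EuclideanSpace ℝ (Fin d)) 1, x + c • ξ ∈ D) :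
    (∫⁻ x in S, ∫⁻ ξ in closedBall (0 : EuclideanSpace ℝ (Fin d)) 1,
        ENNReal.ofReal (((u (x + c • ξ) - u x) / c) ^ 2)) =
    ∫⁻ x in S, ∫⁻ ξ in closedBall (0 : EuclideanSpace ℝ (Fin d)) 1,
        ENNReal.ofReal (((g (x + c • ξ) - g x) / c) ^ 2) := by
  set N : Set (EuclideanSpace ℝ (Fin d)) := {y | y ∈ D ∧ u y ≠ g y} with hNdef
  have hN : volume N = 0 := by
    have h1 : volume.restrict D {y | u y ≠ g y} = 0 := hug
    rw [Measure.restrict_apply' hDm] at h1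
    refine measure_mono_null ?_ h1
    intro y hy
    exact ⟨hy.2, hy.1⟩
  have hNae : ∀ᵐ x ∂(volume : Measure (EuclideanSpace ℝ (Fin d))), x ∉ N := by
    rw [ae_iff]; simpa using hN
  apply lintegral_congr_ae
  filter_upwards [ae_restrict_mem hSm, ae_restrict_of_ae hNae] with x hxS hxN
  apply lintegral_congr_ae
  have hpre : volume ((fun ξ : EuclideanSpace ℝ (Fin d) => x + c • ξ) ⁻¹' N) = 0 := by
    have h0 : (fun ξ : EuclideanSpace ℝ (Fin d) => x + c • ξ) ⁻¹' N
        = (c • ·) ⁻¹' ((fun z => x + z) ⁻¹' N) := rfl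
    rw [h0, Measure.addHaar_preimage_smul volume hc, measure_preimage_add volume x N, hN,
      mul_zero]
  have hpreae : ∀ᵐ ξ ∂(volume : Measure (EuclideanSpace ℝ (Fin d))), x + c • ξ ∉ N := by
    rw [ae_iff]; simp only [not_not]; exact hpre
  filter_upwards [ae_restrict_mem measurableSet_closedBall, ae_restrict_of_ae hpreae]
    with ξ hξB hξN
  have h1 : u x = g x := by
    by_contra h; exact hxN ⟨hSD hxS, h⟩
  have h2 : u (x + c • ξ) = g (x + c • ξ) := by
    by_contra h; exact hξN ⟨hmem x hxS ξ hξB, h⟩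
  rw [h1, h2]

/-- Multi-step estimate for convolution energies: for an open `D ⊆ ℝ^d`,
`k ≥ 1`, `ε > 0`, `u ∈ L²(D)` and every integer `j ≥ 1`,
`F_{jε}^{(j+k)ε,1}(u) ≤ F_ε^{kε,1}(u)`. -/
theorem stmt_2 (d : ℕ) (hd : 1 ≤ d)
    (D : Set (EuclideanSpace ℝ (Fin d))) (hD : IsOpen D)
    (k ε : ℝ) (hk : 1 ≤ k) (hε : 0 < ε)
    (u : EuclideanSpace ℝ (Fin d) → ℝ) (hu : MemLp u 2 (volume.restrict D))
    (j : ℕ) (hj : 1 ≤ j) :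
    (∫⁻ x in {x ∈ D | ((j : ℝ) + k) * ε < infDist x (frontier D)},
        ∫⁻ ξ in closedBall (0 : EuclideanSpace ℝ (Fin d)) 1,
          ENNReal.ofReal (((u (x + ((j : ℝ) * ε) • ξ) - u x) / ((j : ℝ) * ε)) ^ 2)) ≤
      ∫⁻ x in {x ∈ D | k * ε < infDist x (frontier D)},
        ∫⁻ ξ in closedBall (0 : EuclideanSpace ℝ (Fin d)) 1,
          ENNReal.ofReal (((u (x + ε • ξ) - u x) / ε) ^ 2) := by
  obtain ⟨g, hgsm, hug⟩ := hu.aestronglyMeasurable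
  have hg : Measurable g := hgsm.measurable
  set B := closedBall (0 : EuclideanSpace ℝ (Fin d)) 1 with hBdef
  set S₁ := {x ∈ D | ((j : ℝ) + k) * ε < infDist x (frontier D)} with hS₁def
  set S₂ := {x ∈ D | k * ε < infDist x (frontier D)} with hS₂def
  have hinf : MeasurableSet {x : EuclideanSpace ℝ (Fin d) | ((j : ℝ) + k) * ε < infDist x (frontier D)} :=
    (isOpen_lt continuous_const (continuous_infDist_pt _)).measurableSet
  have hinf2 : MeasurableSet {x : EuclideanSpace ℝ (Fin d) | k * ε < infDist x (frontier D)} :=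
    (isOpen_lt continuous_const (continuous_infDist_pt _)).measurableSet
  have hS₁m : MeasurableSet S₁ := hD.measurableSet.inter hinf
  have hS₂m : MeasurableSet S₂ := hD.measurableSet.inter hinf2
  have hj1 : (1 : ℝ) ≤ (j : ℝ) := by exact_mod_cast hj
  have hjpos : (0 : ℝ) < (j : ℝ) := by linarith
  have hjε : (0 : ℝ) < (j : ℝ) * ε := by positivity
  have hnormB : ∀ ξ ∈ B, ‖ξ‖ ≤ 1 := by
    intro ξ hξ; rwa [hBdef, mem_closedBall, dist_zero_right] at hξ
  have hdist : ∀ (x : EuclideanSpace ℝ (Fin d)) (v : EuclideanSpace ℝ (Fin d)),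
      dist (x + v) x = ‖v‖ := by
    intro x v; rw [dist_eq_norm]; simp
  have hmem₁ : ∀ x ∈ S₁, ∀ ξ ∈ B, x + ((j : ℝ) * ε) • ξ ∈ D := by
    intro x hx ξ hξ
    apply mem_of_dist_lt_infDist_frontier hD hx.1
    rw [hdist, norm_smul, Real.norm_eq_abs, abs_of_pos hjε]
    have h1 : (j : ℝ) * ε * ‖ξ‖ ≤ (j : ℝ) * ε * 1 := by
      have := hnormB ξ hξ
      have := norm_nonneg ξ
      nlinarith
    have h2 : (j : ℝ) * ε * 1 < ((j : ℝ) + k) * ε := by nlinarith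
    exact lt_of_le_of_lt (h1.trans h2.le) hx.2
  have hmem₂ : ∀ x ∈ S₂, ∀ ξ ∈ B, x + ε • ξ ∈ D := by
    intro x hx ξ hξ
    apply mem_of_dist_lt_infDist_frontier hD hx.1
    rw [hdist, norm_smul, Real.norm_eq_abs, abs_of_pos hε]
    have h1 : ε * ‖ξ‖ ≤ ε * 1 := by
      have := hnormB ξ hξ
      have := norm_nonneg ξ
      nlinarith
    have h2 : ε * 1 ≤ k * ε := by nlinarith
    exact lt_of_le_of_lt (h1.trans h2) hx.2
  rw [double_lintegral_congr hD.measurableSet hug hS₁m (fun x hx => hx.1) (ne_of_gt hjε) hmem₁,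
    double_lintegral_congr hD.measurableSet hug hS₂m (fun x hx => hx.1) (ne_of_gt hε) hmem₂]
  -- now everything is in terms of the measurable function g
  have hFm : ∀ a b : ℝ, Measurable fun p : (EuclideanSpace ℝ (Fin d)) × (EuclideanSpace ℝ (Fin d)) =>
      ENNReal.ofReal (((g (p.1 + a • p.2) - g (p.1 + b • p.2)) / ε) ^ 2) := by
    intro a b
    have h1 : Measurable fun p : (EuclideanSpace ℝ (Fin d)) × (EuclideanSpace ℝ (Fin d)) =>
        g (p.1 + a • p.2) := hg.comp (measurable_fst.add (measurable_snd.const_smul a))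
    have h2 : Measurable fun p : (EuclideanSpace ℝ (Fin d)) × (EuclideanSpace ℝ (Fin d)) =>
        g (p.1 + b • p.2) := hg.comp (measurable_fst.add (measurable_snd.const_smul b))
    exact ENNReal.measurable_ofReal.comp (((h1.sub h2).div_const ε).pow_const 2)
  have hΦm : Measurable fun p : (EuclideanSpace ℝ (Fin d)) × (EuclideanSpace ℝ (Fin d)) =>
      ENNReal.ofReal (((g (p.1 + ε • p.2) - g p.1) / ε) ^ 2) := by
    have h1 : Measurable fun p : (EuclideanSpace ℝ (Fin d)) × (EuclideanSpace ℝ (Fin d)) =>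
        g (p.1 + ε • p.2) := hg.comp (measurable_fst.add (measurable_snd.const_smul ε))
    have h2 : Measurable fun p : (EuclideanSpace ℝ (Fin d)) × (EuclideanSpace ℝ (Fin d)) =>
        g p.1 := hg.comp measurable_fst
    exact ENNReal.measurable_ofReal.comp (((h1.sub h2).div_const ε).pow_const 2)
  set c : ℝ≥0∞ := ENNReal.ofReal (1 / (j : ℝ)) with hcdef
  set R : ℝ≥0∞ := ∫⁻ x in S₂, ∫⁻ ξ in B, ENNReal.ofReal (((g (x + ε • ξ) - g x) / ε) ^ 2)
    with hRdef
  -- Step 1 : pointwise Cauchy-Schwarz bound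
  have step1 : (∫⁻ x in S₁, ∫⁻ ξ in B,
      ENNReal.ofReal (((g (x + ((j : ℝ) * ε) • ξ) - g x) / ((j : ℝ) * ε)) ^ 2)) ≤
      ∫⁻ x in S₁, ∫⁻ ξ in B, c * ∑ i ∈ Finset.range j,
        ENNReal.ofReal (((g (x + ((↑(i + 1) : ℝ) * ε) • ξ) - g (x + ((i : ℝ) * ε) • ξ)) / ε) ^ 2) := by
    refine lintegral_mono fun x => lintegral_mono fun ξ => ?_
    set f : ℕ → ℝ := fun i => g (x + ((i : ℝ) * ε) • ξ) with hfdef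
    have htel : ∑ i ∈ Finset.range j, (f (i + 1) - f i) = f j - f 0 := Finset.sum_range_sub f j
    have hf0 : f 0 = g x := by simp [hfdef]
    have key : ((f j - f 0) / ((j : ℝ) * ε)) ^ 2 ≤
        (1 / (j : ℝ)) * ∑ i ∈ Finset.range j, ((f (i + 1) - f i) / ε) ^ 2 := by
      have h1 : (∑ i ∈ Finset.range j, (f (i + 1) - f i)) ^ 2 ≤
          (j : ℝ) * ∑ i ∈ Finset.range j, (f (i + 1) - f i) ^ 2 := by
        have h := sq_sum_le_card_mul_sum_sq (s := Finset.range j)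
          (f := fun i => f (i + 1) - f i)
        simpa using h
      calc ((f j - f 0) / ((j : ℝ) * ε)) ^ 2
          = (∑ i ∈ Finset.range j, (f (i + 1) - f i)) ^ 2 / ((j : ℝ) * ε) ^ 2 := by
            rw [htel, div_pow]
        _ ≤ ((j : ℝ) * ∑ i ∈ Finset.range j, (f (i + 1) - f i) ^ 2) / ((j : ℝ) * ε) ^ 2 := by
            gcongr
        _ = (1 / (j : ℝ)) * ∑ i ∈ Finset.range j, ((f (i + 1) - f i) / ε) ^ 2 := by
            rw [Finset.mul_sum, Finset.mul_sum, Finset.sum_div]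
            refine Finset.sum_congr rfl fun i _ => ?_
            field_simp
    calc ENNReal.ofReal (((g (x + ((j : ℝ) * ε) • ξ) - g x) / ((j : ℝ) * ε)) ^ 2)
        = ENNReal.ofReal (((f j - f 0) / ((j : ℝ) * ε)) ^ 2) := by rw [hf0]
      _ ≤ ENNReal.ofReal ((1 / (j : ℝ)) * ∑ i ∈ Finset.range j, ((f (i + 1) - f i) / ε) ^ 2) :=
          ENNReal.ofReal_le_ofReal key
      _ = c * ∑ i ∈ Finset.range j,
            ENNReal.ofReal (((f (i + 1) - f i) / ε) ^ 2) := by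
          rw [ENNReal.ofReal_mul (by positivity),
            ENNReal.ofReal_sum_of_nonneg (fun i _ => sq_nonneg _)]
      _ = c * ∑ i ∈ Finset.range j,
            ENNReal.ofReal (((g (x + ((↑(i + 1) : ℝ) * ε) • ξ) - g (x + ((i : ℝ) * ε) • ξ)) / ε) ^ 2) := rfl
  -- Step 2 : pull the constant and the sum out of the integrals
  have step2 : (∫⁻ x in S₁, ∫⁻ ξ in B, c * ∑ i ∈ Finset.range j,
      ENNReal.ofReal (((g (x + ((↑(i + 1) : ℝ) * ε) • ξ) - g (x + ((i : ℝ) * ε) • ξ)) / ε) ^ 2)) =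
      c * ∑ i ∈ Finset.range j, ∫⁻ x in S₁, ∫⁻ ξ in B,
        ENNReal.ofReal (((g (x + ((↑(i + 1) : ℝ) * ε) • ξ) - g (x + ((i : ℝ) * ε) • ξ)) / ε) ^ 2) := by
    have e1 : ∀ x : EuclideanSpace ℝ (Fin d), (∫⁻ ξ in B, c * ∑ i ∈ Finset.range j,
        ENNReal.ofReal (((g (x + ((↑(i + 1) : ℝ) * ε) • ξ) - g (x + ((i : ℝ) * ε) • ξ)) / ε) ^ 2)) =
        c * ∑ i ∈ Finset.range j, ∫⁻ ξ in B,
          ENNReal.ofReal (((g (x + ((↑(i + 1) : ℝ) * ε) • ξ) - g (x + ((i : ℝ) * ε) • ξ)) / ε) ^ 2) := by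
      intro x
      rw [lintegral_const_mul' c _ ENNReal.ofReal_ne_top]
      congr 1
      exact lintegral_finset_sum' (Finset.range j)
        (fun i _ => ((hFm _ _).comp measurable_prodMk_left).aemeasurable)
    calc (∫⁻ x in S₁, ∫⁻ ξ in B, c * ∑ i ∈ Finset.range j,
        ENNReal.ofReal (((g (x + ((↑(i + 1) : ℝ) * ε) • ξ) - g (x + ((i : ℝ) * ε) • ξ)) / ε) ^ 2))
        = ∫⁻ x in S₁, c * ∑ i ∈ Finset.range j, ∫⁻ ξ in B,
            ENNReal.ofReal (((g (x + ((↑(i + 1) : ℝ) * ε) • ξ) - g (x + ((i : ℝ) * ε) • ξ)) / ε) ^ 2) :=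
          lintegral_congr e1
      _ = c * ∫⁻ x in S₁, ∑ i ∈ Finset.range j, ∫⁻ ξ in B,
            ENNReal.ofReal (((g (x + ((↑(i + 1) : ℝ) * ε) • ξ) - g (x + ((i : ℝ) * ε) • ξ)) / ε) ^ 2) :=
          lintegral_const_mul' c _ ENNReal.ofReal_ne_top
      _ = c * ∑ i ∈ Finset.range j, ∫⁻ x in S₁, ∫⁻ ξ in B,
            ENNReal.ofReal (((g (x + ((↑(i + 1) : ℝ) * ε) • ξ) - g (x + ((i : ℝ) * ε) • ξ)) / ε) ^ 2) := by
          congr 1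
          refine lintegral_finset_sum' (Finset.range j) fun i _ => ?_
          exact (Measurable.lintegral_prod_right
            (f := fun x ξ => ENNReal.ofReal
              (((g (x + ((↑(i + 1) : ℝ) * ε) • ξ) - g (x + ((i : ℝ) * ε) • ξ)) / ε) ^ 2))
            (hFm _ _)).aemeasurable
  -- Step 3 : each shifted integral is bounded by `R`
  have step3 : ∀ i ∈ Finset.range j, (∫⁻ x in S₁, ∫⁻ ξ in B,
      ENNReal.ofReal (((g (x + ((↑(i + 1) : ℝ) * ε) • ξ) - g (x + ((i : ℝ) * ε) • ξ)) / ε) ^ 2)) ≤ R := by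
    intro i hi
    have hij : i < j := Finset.mem_range.1 hi
    have hijR : (i : ℝ) ≤ (j : ℝ) - 1 := by
      have : (i : ℝ) + 1 ≤ (j : ℝ) := by exact_mod_cast hij
      linarith
    have hswapL : (∫⁻ x in S₁, ∫⁻ ξ in B,
        ENNReal.ofReal (((g (x + ((↑(i + 1) : ℝ) * ε) • ξ) - g (x + ((i : ℝ) * ε) • ξ)) / ε) ^ 2)) =
        ∫⁻ ξ in B, ∫⁻ x in S₁,
          ENNReal.ofReal (((g (x + ((↑(i + 1) : ℝ) * ε) • ξ) - g (x + ((i : ℝ) * ε) • ξ)) / ε) ^ 2) :=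
      lintegral_lintegral_swap
        (f := fun x ξ => ENNReal.ofReal
          (((g (x + ((↑(i + 1) : ℝ) * ε) • ξ) - g (x + ((i : ℝ) * ε) • ξ)) / ε) ^ 2))
        ((hFm _ _).aemeasurable)
    have hswapR : R = ∫⁻ ξ in B, ∫⁻ x in S₂,
        ENNReal.ofReal (((g (x + ε • ξ) - g x) / ε) ^ 2) :=
      lintegral_lintegral_swap
        (f := fun x ξ => ENNReal.ofReal (((g (x + ε • ξ) - g x) / ε) ^ 2))
        (hΦm.aemeasurable)
    rw [hswapL, hswapR]
    refine lintegral_mono_ae ?_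
    filter_upwards [ae_restrict_mem measurableSet_closedBall] with ξ hξ
    have hξ1 : ‖ξ‖ ≤ 1 := hnormB ξ hξ
    set v : EuclideanSpace ℝ (Fin d) := ((i : ℝ) * ε) • ξ with hvdef
    have hnv : ‖v‖ ≤ ((j : ℝ) - 1) * ε := by
      rw [hvdef, norm_smul, Real.norm_eq_abs, abs_of_nonneg (by positivity)]
      have h0 : (0 : ℝ) ≤ (i : ℝ) * ε := by positivity
      nlinarith [norm_nonneg ξ]
    have hrw : ∀ x : EuclideanSpace ℝ (Fin d),
        ENNReal.ofReal (((g (x + ((↑(i + 1) : ℝ) * ε) • ξ) - g (x + ((i : ℝ) * ε) • ξ)) / ε) ^ 2) =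
        ENNReal.ofReal (((g ((x + v) + ε • ξ) - g (x + v)) / ε) ^ 2) := by
      intro x
      have : x + v + ε • ξ = x + ((↑(i + 1) : ℝ) * ε) • ξ := by
        rw [hvdef, add_assoc, ← add_smul]
        congr 2
        push_cast
        ring
      rw [this]
    have himg : (· + v) '' S₁ ⊆ S₂ := by
      rintro y ⟨x, hx, rfl⟩
      have hdxy : dist (x + v) x < infDist x (frontier D) := by
        rw [hdist]
        have : ((j : ℝ) - 1) * ε < ((j : ℝ) + k) * ε := by nlinarith
        exact lt_of_le_of_lt hnv (this.trans hx.2)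
      refine ⟨mem_of_dist_lt_infDist_frontier hD hx.1 hdxy, ?_⟩
      have hl : infDist x (frontier D) ≤ infDist (x + v) (frontier D) + dist x (x + v) :=
        infDist_le_infDist_add_dist
      have hdxv : dist x (x + v) = ‖v‖ := by rw [dist_comm, hdist]
      have hx2 : ((j : ℝ) + k) * ε < infDist x (frontier D) := hx.2
      rw [hdxv] at hl
      have h4 : ((j : ℝ) + k) * ε - ((j : ℝ) - 1) * ε = (k + 1) * ε := by ring
      have h5 : k * ε + ε = (k + 1) * ε := by ring
      linarith
    calc (∫⁻ x in S₁,
        ENNReal.ofReal (((g (x + ((↑(i + 1) : ℝ) * ε) • ξ) - g (x + ((i : ℝ) * ε) • ξ)) / ε) ^ 2))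
        = ∫⁻ x in S₁, ENNReal.ofReal (((g ((x + v) + ε • ξ) - g (x + v)) / ε) ^ 2) :=
          lintegral_congr fun x => hrw x
      _ = ∫⁻ y in (· + v) '' S₁, ENNReal.ofReal (((g (y + ε • ξ) - g y) / ε) ^ 2) :=
          (measurePreserving_add_right volume v).setLIntegral_comp_emb
            (MeasurableEquiv.addRight v).measurableEmbedding
            (fun y => ENNReal.ofReal (((g (y + ε • ξ) - g y) / ε) ^ 2)) S₁
      _ ≤ ∫⁻ y in S₂, ENNReal.ofReal (((g (y + ε • ξ) - g y) / ε) ^ 2) :=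
          lintegral_mono_set himg
  -- Combine everything
  calc (∫⁻ x in S₁, ∫⁻ ξ in B,
      ENNReal.ofReal (((g (x + ((j : ℝ) * ε) • ξ) - g x) / ((j : ℝ) * ε)) ^ 2))
      ≤ c * ∑ i ∈ Finset.range j, ∫⁻ x in S₁, ∫⁻ ξ in B,
          ENNReal.ofReal (((g (x + ((↑(i + 1) : ℝ) * ε) • ξ) - g (x + ((i : ℝ) * ε) • ξ)) / ε) ^ 2) :=
        step1.trans_eq step2
    _ ≤ c * ∑ _i ∈ Finset.range j, R := by
        exact mul_le_mul_right (Finset.sum_le_sum step3) c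
    _ = c * ((j : ℝ≥0∞) * R) := by
        rw [Finset.sum_const, Finset.card_range, nsmul_eq_mul]
    _ = R := by
        have hcj : c = ((j : ℕ) : ℝ≥0∞)⁻¹ := by
          rw [hcdef, one_div, ENNReal.ofReal_inv_of_pos hjpos, ENNReal.ofReal_natCast]
        rw [hcj, ← mul_assoc, ENNReal.inv_mul_cancel, one_mul]
        · exact Nat.cast_ne_zero.2 (by omega)
        · exact ENNReal.natCast_ne_top j
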